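/- arXiv:2002.04912 — 6 statements merged into one kernel-verified Lean document; each statement's English description precedes it below -/
import Mathlib

section
/- Let p be a prime and let l, k be positive integers with l | k. Then, as maps on the algebraic closure of 𝔽_p: if k/l is even then S_l^k ∘ T_l^{2l} = S_k^{2k}, i.e. S_l^k(x + x^{p^l}) = x − x^{p^k} for all x; and if k/l is odd then S_l^k ∘ T_l^{2l} = T_k^{2k}, i.e. S_l^k(x + x^{p^l}) = x + x^{p^k} for all x. -/
open Finset

/-- `Tmap p u v x = Σ_{i=0}^{v/u - 1} x^{p^{u i}}` on the algebraic closure of `𝔽_p`. -/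
noncomputable def Tmap (p : ℕ) [Fact p.Prime] (u v : ℕ) (x : AlgebraicClosure (ZMod p)) :
    AlgebraicClosure (ZMod p) :=
  ∑ i ∈ Finset.range (v / u), x ^ p ^ (u * i)

/-- `Smap p u v x = Σ_{i=0}^{v/u - 1} (-1)^i x^{p^{u i}}` on the algebraic closure of `𝔽_p`. -/
noncomputable def Smap (p : ℕ) [Fact p.Prime] (u v : ℕ) (x : AlgebraicClosure (ZMod p)) :
    AlgebraicClosure (ZMod p) :=
  ∑ i ∈ Finset.range (v / u), (-1 : AlgebraicClosure (ZMod p)) ^ i * x ^ p ^ (u * i)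

/-- `Ffield p m` is the subfield `𝔽_{p^m} = {x : x^{p^m} = x}` of the algebraic closure of `𝔽_p`. -/
def Ffield (p : ℕ) [Fact p.Prime] (m : ℕ) : Set (AlgebraicClosure (ZMod p)) :=
  {x | x ^ p ^ m = x}

lemma telescope (p : ℕ) [Fact p.Prime] (l m : ℕ) (x : AlgebraicClosure (ZMod p)) :
    ∑ i ∈ Finset.range m, (-1 : AlgebraicClosure (ZMod p)) ^ i *
      (x ^ p ^ (l * i) + x ^ p ^ (l * (i + 1)))
      = x - (-1) ^ m * x ^ p ^ (l * m) := by
  induction m with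
  | zero => simp
  | succ n ih =>
      rw [Finset.sum_range_succ, ih]
      ring

theorem stmt1 (p : ℕ) [Fact p.Prime] (l k : ℕ) (hl : 0 < l) (hk : 0 < k) (hlk : l ∣ k) :
    (Even (k / l) → ∀ x : AlgebraicClosure (ZMod p),
      Smap p l k (x + x ^ p ^ l) = x - x ^ p ^ k) ∧
    (Odd (k / l) → ∀ x : AlgebraicClosure (ZMod p),
      Smap p l k (x + x ^ p ^ l) = x + x ^ p ^ k) := by
  have hchar : CharP (AlgebraicClosure (ZMod p)) p := inferInstance
  have key : ∀ x : AlgebraicClosure (ZMod p),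
      Smap p l k (x + x ^ p ^ l) = x - (-1) ^ (k / l) * x ^ p ^ k := by
    intro x
    have hk' : l * (k / l) = k := Nat.mul_div_cancel' hlk
    rw [Smap]
    have : ∀ i ∈ Finset.range (k / l),
        (-1 : AlgebraicClosure (ZMod p)) ^ i * (x + x ^ p ^ l) ^ p ^ (l * i)
          = (-1) ^ i * (x ^ p ^ (l * i) + x ^ p ^ (l * (i + 1))) := by
      intro i _
      rw [add_pow_char_pow, ← pow_mul, ← pow_add, Nat.mul_add, Nat.mul_one, Nat.add_comm]
    rw [Finset.sum_congr rfl this, telescope, hk']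
  constructor
  · intro he x
    rw [key x, Even.neg_one_pow he, one_mul]
  · intro ho x
    rw [key x, Odd.neg_one_pow ho]
    ring
end

section
/- Let p be a prime, let n, k be positive integers, and set d = gcd(n,k). Then T_k^{lcm(n,k)}(x) = T_d^n(x) for every x ∈ 𝔽_{p^n}. Moreover, if lcm(n,k)/k is even, then also S_k^{lcm(n,k)}(x) = S_d^n(x) for every x ∈ 𝔽_{p^n}. -/
open Finset

lemma pow_p_mod {p : ℕ} [Fact p.Prime] {n : ℕ} (hn : 0 < n)
    {x : AlgebraicClosure (ZMod p)} (hx : x ^ p ^ n = x) (a : ℕ) :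
    x ^ p ^ a = x ^ p ^ (a % n) := by
  have key : ∀ q r, x ^ p ^ (n * q + r) = x ^ p ^ r := by
    intro q
    induction q with
    | zero => simp
    | succ q ih =>
      intro r
      have h : n * (q + 1) + r = n + (n * q + r) := by ring
      rw [h, pow_add, pow_mul, hx, ih]
  conv_lhs => rw [← Nat.div_add_mod a n, key]

lemma neg_one_pow_mod2 {R : Type*} [Monoid R] [HasDistribNeg R] {a b : ℕ}
    (h : a % 2 = b % 2) : ((-1 : R)) ^ a = (-1) ^ b := by
  conv_lhs => rw [← Nat.div_add_mod a 2]
  conv_rhs => rw [← Nat.div_add_mod b 2]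
  rw [pow_add, pow_add, pow_mul, pow_mul, neg_one_sq, one_pow, one_pow, h]

theorem stmt3 (p : ℕ) [Fact p.Prime] (n k : ℕ) (hn : 0 < n) (hk : 0 < k)
    (d : ℕ) (hd : d = Nat.gcd n k) :
    (∀ x ∈ Ffield p n, Tmap p k (Nat.lcm n k) x = Tmap p d n x) ∧
    (Even (Nat.lcm n k / k) → ∀ x ∈ Ffield p n,
      Smap p k (Nat.lcm n k) x = Smap p d n x) := by
  subst hd
  set d := Nat.gcd n k with hd
  have hdpos : 0 < d := Nat.gcd_pos_of_pos_left k hn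
  have hdn : d ∣ n := Nat.gcd_dvd_left n k
  have hdk : d ∣ k := Nat.gcd_dvd_right n k
  set m := n / d with hm
  set e := k / d with he
  have hn' : d * m = n := Nat.mul_div_cancel' hdn
  have hk' : d * e = k := Nat.mul_div_cancel' hdk
  have hmpos : 0 < m := Nat.div_pos (Nat.le_of_dvd hn hdn) hdpos
  have hcop : Nat.Coprime m e := Nat.coprime_div_gcd_div_gcd hdpos
  -- lcm n k / k = m
  have hlcm : Nat.lcm n k / k = m := by
    have h1 : d * Nat.lcm n k = n * k := Nat.gcd_mul_lcm n k
    have h2 : d * Nat.lcm n k = d * (m * k) := by rw [h1, ← hn']; ring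
    have h3 : Nat.lcm n k = m * k := Nat.eq_of_mul_eq_mul_left hdpos h2
    rw [h3, Nat.mul_div_cancel _ hk]
  -- key mod identity
  have hmod : ∀ i : ℕ, (k * i) % n = d * ((e * i) % m) := by
    intro i
    rw [← hn', ← hk', Nat.mul_assoc, Nat.mul_mod_mul_left]
  -- the bijection on range m
  have hbij : ∀ (f : ℕ → AlgebraicClosure (ZMod p)),
      (∑ i ∈ range m, f ((e * i) % m)) = ∑ i ∈ range m, f i := by
    intro f
    rcases eq_or_lt_of_le (show 1 ≤ m from hmpos) with h1 | h1
    · simp [← h1]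
    obtain ⟨c, -, hc⟩ := Nat.exists_mul_mod_eq_one_of_coprime hcop.symm h1
    have hc' : c * e % m = 1 := by rwa [Nat.mul_comm] at hc
    have hgen : ∀ u v : ℕ, u * v % m = 1 → ∀ a < m, (u * ((v * a) % m)) % m = a := by
      intro u v huv a ha
      have h2 : u * ((v * a) % m) ≡ (u * v) * a [MOD m] := by
        calc u * ((v * a) % m) ≡ u * (v * a) [MOD m] :=
              Nat.ModEq.mul_left u (Nat.mod_modEq _ _)
          _ = (u * v) * a := by ring
      have h3 : (u * v) * a ≡ 1 * a [MOD m] := by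
        refine Nat.ModEq.mul_right a ?_
        unfold Nat.ModEq
        rw [huv, Nat.mod_eq_of_lt h1]
      have h4 : u * ((v * a) % m) ≡ a [MOD m] := by
        simpa using h2.trans h3
      calc u * ((v * a) % m) % m = a % m := h4
        _ = a := Nat.mod_eq_of_lt ha
    refine Finset.sum_nbij' (fun i => (e * i) % m) (fun j => (c * j) % m) ?_ ?_ ?_ ?_ ?_
    · intro a _; exact mem_range.mpr (Nat.mod_lt _ hmpos)
    · intro a _; exact mem_range.mpr (Nat.mod_lt _ hmpos)
    · intro a ha; exact hgen c e hc' a (mem_range.mp ha)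
    · intro a ha; exact hgen e c hc a (mem_range.mp ha)
    · intro a _; rfl
  constructor
  · intro x hx
    have hx' : x ^ p ^ n = x := hx
    unfold Tmap
    rw [hlcm, hm]
    calc ∑ i ∈ range m, x ^ p ^ (k * i)
        = ∑ i ∈ range m, x ^ p ^ (d * ((e * i) % m)) := by
          refine Finset.sum_congr rfl fun i _ => ?_
          rw [pow_p_mod hn hx' (k * i), hmod i]
      _ = ∑ i ∈ range m, x ^ p ^ (d * i) := hbij fun j => x ^ p ^ (d * j)
  · intro heven x hx
    have hx' : x ^ p ^ n = x := hx
    rw [hlcm] at heven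
    have hme : m % 2 = 0 := Nat.even_iff.mp heven
    have heodd : e % 2 = 1 := by
      rcases Nat.even_or_odd e with h | h
      · exfalso
        have h2 : (2 : ℕ) ∣ Nat.gcd m e :=
          Nat.dvd_gcd (Nat.dvd_of_mod_eq_zero hme) h.two_dvd
        rw [hcop] at h2
        omega
      · exact Nat.odd_iff.mp h
    have hsign : ∀ i : ℕ, ((-1 : AlgebraicClosure (ZMod p))) ^ ((e * i) % m) = (-1) ^ i := by
      intro i
      refine neg_one_pow_mod2 ?_
      have h1 : (e * i) % m % 2 = (e * i) % 2 :=
        Nat.mod_mod_of_dvd _ (Nat.dvd_of_mod_eq_zero hme)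
      rw [h1]
      simp [Nat.mul_mod, heodd]
    unfold Smap
    rw [hlcm, hm]
    calc ∑ i ∈ range m, (-1 : AlgebraicClosure (ZMod p)) ^ i * x ^ p ^ (k * i)
        = ∑ i ∈ range m, (-1 : AlgebraicClosure (ZMod p)) ^ ((e * i) % m)
            * x ^ p ^ (d * ((e * i) % m)) := by
          refine Finset.sum_congr rfl fun i _ => ?_
          rw [pow_p_mod hn hx' (k * i), hmod i, hsign i]
      _ = ∑ i ∈ range m, (-1 : AlgebraicClosure (ZMod p)) ^ i * x ^ p ^ (d * i) :=
          hbij fun j => (-1 : AlgebraicClosure (ZMod p)) ^ j * x ^ p ^ (d * j)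
end

section
/- Let p be a prime and let l, k be positive integers with l | k and k/l even. Then the set of zeros of S_l^k in the algebraic closure of 𝔽_p equals {x + x^{p^l} : x ∈ 𝔽_{p^k}}. -/
open Finset

theorem stmt6 (p : ℕ) [Fact p.Prime] (l k : ℕ) (hl : 0 < l) (hk : 0 < k) (hlk : l ∣ k)
    (heven : Even (k / l)) :
    {x : AlgebraicClosure (ZMod p) | Smap p l k x = 0} =
      (fun x => x + x ^ p ^ l) '' Ffield p k := by
  classical
  open Polynomial in
  set K := AlgebraicClosure (ZMod p)
  have hp2 : 2 ≤ p := (Fact.out : p.Prime).two_le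
  set n := k / l with hn
  have hln : l * n = k := Nat.mul_div_cancel' hlk
  have hn1 : 1 ≤ n := Nat.div_pos (Nat.le_of_dvd hk hlk) hl
  -- Step A : the image is contained in the zero set
  have hA : (fun x => x + x ^ p ^ l) '' Ffield p k ⊆ {x : K | Smap p l k x = 0} := by
    rintro _ ⟨y, hy, rfl⟩
    have hy' : y ^ p ^ k = y := hy
    show Smap p l k (y + y ^ p ^ l) = 0
    set f : ℕ → K := fun j => (-1 : K) ^ j * y ^ p ^ (l * j) with hf
    have hterm : ∀ i ∈ Finset.range n,
        (-1 : K) ^ i * (y + y ^ p ^ l) ^ p ^ (l * i) = f i - f (i + 1) := by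
      intro i _
      have h1 : (y ^ p ^ l) ^ p ^ (l * i) = y ^ p ^ (l * (i + 1)) := by
        rw [← pow_mul, ← pow_add]
        ring_nf
      rw [add_pow_char_pow (p := p), h1, hf]
      simp only [pow_succ]
      ring
    unfold Smap
    rw [Finset.sum_congr rfl hterm, Finset.sum_range_sub']
    have h0 : f 0 = y := by simp [hf]
    have hnn : f n = y := by
      rw [hf]
      simp only
      rw [hln, hy', heven.neg_one_pow, one_mul]
    rw [h0, hnn, sub_self]
  -- the polynomial whose evaluation is `Smap p l k`
  set D : ℕ := p ^ (l * (n - 1)) with hD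
  set P : K[X] := ∑ i ∈ Finset.range n, C ((-1 : K) ^ i) * X ^ (p ^ (l * i)) with hP
  have heval : ∀ x : K, P.eval x = Smap p l k x := by
    intro x
    rw [hP]
    unfold Smap
    rw [Polynomial.eval_finset_sum]
    simp
    rfl
  have hpowinj : ∀ i ∈ Finset.range n, i ≠ n - 1 → p ^ (l * i) ≠ D := by
    intro i hi hne hcon
    have := Nat.pow_right_injective hp2 hcon
    have : i = n - 1 := Nat.eq_of_mul_eq_mul_left hl this
    exact hne this
  have hcoeff : P.coeff D = (-1 : K) ^ (n - 1) := by
    rw [hP, Polynomial.finset_sum_coeff]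
    rw [Finset.sum_eq_single (n - 1)]
    · rw [Polynomial.coeff_C_mul, Polynomial.coeff_X_pow, hD, if_pos rfl, mul_one]
    · intro i hi hne
      rw [Polynomial.coeff_C_mul, Polynomial.coeff_X_pow, if_neg, mul_zero]
      exact fun h => hpowinj i hi hne h.symm
    · intro h
      exact absurd (Finset.mem_range.mpr (by omega)) h
  have hPne : P ≠ 0 := by
    intro h
    rw [h, Polynomial.coeff_zero] at hcoeff
    exact pow_ne_zero _ (by norm_num : (-1:K) ≠ 0) hcoeff.symm
  have hdeg : P.natDegree ≤ D := by
    rw [hP]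
    apply Polynomial.natDegree_sum_le_of_forall_le
    intro i hi
    refine le_trans (Polynomial.natDegree_C_mul_le _ _) ?_
    rw [Polynomial.natDegree_X_pow]
    exact Nat.pow_le_pow_right (by omega)
      (Nat.mul_le_mul_left l (by rw [Finset.mem_range] at hi; omega))
  set Z : Finset K := P.roots.toFinset with hZ
  have hZcard : Z.card ≤ D :=
    le_trans (Multiset.toFinset_card_le _) (le_trans (Polynomial.card_roots' P) hdeg)
  have hB : {x : K | Smap p l k x = 0} ⊆ ↑Z := by
    intro x hx
    rw [Set.mem_setOf_eq] at hx
    rw [hZ]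
    simp only [Finset.coe_sort_coe, Multiset.mem_toFinset, Finset.mem_coe]
    rw [Polynomial.mem_roots hPne]
    exact (heval x).trans hx
  -- the field with p^k elements as a finset
  set Q : K[X] := X ^ (p ^ k) - X with hQ
  have hpk2 : 2 ≤ p ^ k := Nat.one_lt_pow hk.ne' hp2
  have hpl2 : 2 ≤ p ^ l := Nat.one_lt_pow hl.ne' hp2
  have hQd : Q.natDegree = p ^ k := by
    rw [hQ, Polynomial.natDegree_sub_eq_left_of_natDegree_lt, Polynomial.natDegree_X_pow]
    rw [Polynomial.natDegree_X_pow, Polynomial.natDegree_X]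
    omega
  have hQne : Q ≠ 0 := by
    intro h
    rw [h, Polynomial.natDegree_zero] at hQd
    omega
  have hQder : Q.derivative = -1 := by
    rw [hQ]
    rw [Polynomial.derivative_sub, Polynomial.derivative_X_pow, Polynomial.derivative_X]
    have : ((p ^ k : ℕ) : K) = 0 := by
      rw [Nat.cast_pow, CharP.cast_eq_zero, zero_pow hk.ne']
    rw [this, map_zero, zero_mul, zero_sub]
  have hQsep : Q.Separable := ⟨0, -1, by rw [hQder]; ring⟩
  have hQsplit : Q.Splits := IsAlgClosed.splits Q
  have hQroots : Multiset.card Q.roots = p ^ k := by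
    rw [(Polynomial.splits_iff_card_roots).mp hQsplit, hQd]
  set F : Finset K := Q.roots.toFinset with hF
  have hFcard : F.card = p ^ k := by
    rw [hF, Multiset.toFinset_card_of_nodup (Polynomial.nodup_roots hQsep)]
    exact hQroots
  have hFset : Ffield p k = ↑F := by
    ext x
    simp only [Ffield, Set.mem_setOf_eq, hF, Finset.coe_sort_coe, Multiset.mem_toFinset,
      Finset.mem_coe, Polynomial.mem_roots hQne, Polynomial.IsRoot, hQ]
    simp [sub_eq_zero]
    exact fun _ h => hQne (by rw [hQ, h, sub_self])
  set I : Finset K := F.image (fun y => y + y ^ p ^ l) with hI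
  have hIset : (fun x : K => x + x ^ p ^ l) '' Ffield p k = ↑I := by
    rw [hFset, hI, Finset.coe_image]
  -- fibers of the map y ↦ y + y^{p^l} have at most p^l elements
  set R : Finset K := (X ^ (p ^ l) + X : K[X]).roots.toFinset with hR
  have hXne : (X ^ (p ^ l) + X : K[X]) ≠ 0 := by
    intro h
    have h2 : ((X : K[X]) ^ (p ^ l) + X).coeff (p ^ l) = 1 := by
      rw [Polynomial.coeff_add, Polynomial.coeff_X_pow, if_pos rfl,
        Polynomial.coeff_X_of_ne_one (show p ^ l ≠ 1 by omega), add_zero]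
    rw [h] at h2
    simp at h2
  have hRcard : R.card ≤ p ^ l := by
    refine le_trans (Multiset.toFinset_card_le _) (le_trans (Polynomial.card_roots' _) ?_)
    refine le_trans (Polynomial.natDegree_add_le _ _) ?_
    simp only [Polynomial.natDegree_X_pow, Polynomial.natDegree_X]
    omega
  have hfib : ∀ z ∈ I, (F.filter (fun y => y + y ^ p ^ l = z)).card ≤ p ^ l := by
    intro z hz
    rw [hI, Finset.mem_image] at hz
    obtain ⟨y₀, hy₀F, hy₀⟩ := hz
    refine le_trans (Finset.card_le_card_of_injOn (fun y => y - y₀) ?_ ?_) hRcard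
    · intro y hy
      rw [Finset.mem_coe, Finset.mem_filter] at hy
      obtain ⟨_, hyz⟩ := hy
      rw [hR, Finset.mem_coe]
      rw [Multiset.mem_toFinset, Polynomial.mem_roots hXne]
      show Polynomial.eval (y - y₀) _ = 0
      rw [Polynomial.eval_add, Polynomial.eval_pow, Polynomial.eval_X]
      rw [sub_pow_char_pow (p := p)]
      have : y ^ p ^ l - y₀ ^ p ^ l + (y - y₀) = (y + y ^ p ^ l) - (y₀ + y₀ ^ p ^ l) := by ring
      rw [this, hyz, hy₀, sub_self]
    · intro a _ b _ hab
      exact sub_left_injective hab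
  have hcard : F.card ≤ p ^ l * I.card := Finset.card_le_mul_card_image F (p ^ l) hfib
  have hDmul : p ^ l * D = p ^ k := by
    rw [hD, ← pow_add, ← hln]
    congr 1
    have : n - 1 + 1 = n := by omega
    calc l + l * (n - 1) = l * (n - 1 + 1) := by ring
    _ = l * n := by rw [this]
  have hDleI : D ≤ I.card := by
    have h1 : p ^ l * D ≤ p ^ l * I.card := by rw [hDmul, ← hFcard]; exact hcard
    exact Nat.le_of_mul_le_mul_left h1 (by positivity)
  have hIZ : I ⊆ Z := by
    rw [← Finset.coe_subset]
    calc (↑I : Set K) = (fun x : K => x + x ^ p ^ l) '' Ffield p k := hIset.symm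
    _ ⊆ {x : K | Smap p l k x = 0} := hA
    _ ⊆ ↑Z := hB
  have hZI : I = Z := Finset.eq_of_subset_of_card_le hIZ (le_trans hZcard hDleI)
  apply Set.Subset.antisymm
  · calc {x : K | Smap p l k x = 0} ⊆ ↑Z := hB
    _ = ↑I := by rw [hZI]
    _ = (fun x : K => x + x ^ p ^ l) '' Ffield p k := hIset.symm
  · exact hA
end

section
/- Let p be a prime and let l, k be positive integers with l | k and k/l odd. Then the set of zeros of S_l^k in the algebraic closure of 𝔽_p equals {(x + x^{p^l}) − (x + x^{p^l})^{p^k} : x ∈ 𝔽_{p^{2k}}}. -/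
open Finset

section Aux

open Polynomial

variable {K : Type*} [Field K] (p : ℕ) [Fact p.Prime] [CharP K p]

private lemma aux_smap_add (l k : ℕ) (hlk : l ∣ k) (hodd : Odd (k / l)) (x : K) :
    ∑ i ∈ Finset.range (k / l), (-1 : K) ^ i * (x + x ^ p ^ l) ^ p ^ (l * i) =
      x + x ^ p ^ k := by
  have hn : l * (k / l) = k := Nat.mul_div_cancel' hlk
  have key : ∀ i, (-1 : K) ^ i * (x + x ^ p ^ l) ^ p ^ (l * i) =
      (fun j => (-1 : K) ^ j * x ^ p ^ (l * j)) i -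
      (fun j => (-1 : K) ^ j * x ^ p ^ (l * j)) (i + 1) := by
    intro i
    have h1 : (x + x ^ p ^ l) ^ p ^ (l * i) = x ^ p ^ (l * i) + (x ^ p ^ l) ^ p ^ (l * i) :=
      add_pow_char_pow x (x ^ p ^ l) p (l * i)
    have h2 : (x ^ p ^ l) ^ p ^ (l * i) = x ^ p ^ (l * (i + 1)) := by
      rw [← pow_mul, ← pow_add]
      have : l + l * i = l * (i + 1) := by ring
      rw [this]
    simp only [h1, h2]
    ring
  calc ∑ i ∈ Finset.range (k / l), (-1 : K) ^ i * (x + x ^ p ^ l) ^ p ^ (l * i)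
      = ∑ i ∈ Finset.range (k / l), ((fun j => (-1 : K) ^ j * x ^ p ^ (l * j)) i -
          (fun j => (-1 : K) ^ j * x ^ p ^ (l * j)) (i + 1)) :=
        Finset.sum_congr rfl fun i _ => key i
    _ = (fun j => (-1 : K) ^ j * x ^ p ^ (l * j)) 0 -
          (fun j => (-1 : K) ^ j * x ^ p ^ (l * j)) (k / l) :=
        Finset.sum_range_sub' _ _
    _ = x + x ^ p ^ k := by
        simp only [pow_zero, Nat.mul_zero, one_mul, hodd.neg_one_pow, hn, pow_one]
        ring

private lemma aux_smap_sub (l k : ℕ) (y : K) :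
    ∑ i ∈ Finset.range (k / l), (-1 : K) ^ i * (y - y ^ p ^ k) ^ p ^ (l * i) =
      (∑ i ∈ Finset.range (k / l), (-1 : K) ^ i * y ^ p ^ (l * i)) -
      (∑ i ∈ Finset.range (k / l), (-1 : K) ^ i * y ^ p ^ (l * i)) ^ p ^ k := by
  have key : ∀ i, (-1 : K) ^ i * (y - y ^ p ^ k) ^ p ^ (l * i) =
      (-1 : K) ^ i * y ^ p ^ (l * i) - (-1 : K) ^ i * (y ^ p ^ (l * i)) ^ p ^ k := by
    intro i
    have h1 : (y - y ^ p ^ k) ^ p ^ (l * i) = y ^ p ^ (l * i) - (y ^ p ^ k) ^ p ^ (l * i) :=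
      sub_pow_char_pow y (y ^ p ^ k) (l * i)
    rw [h1, pow_right_comm]
    ring
  rw [Finset.sum_congr rfl fun i _ => key i, Finset.sum_sub_distrib]
  congr 1
  have hφ : ((∑ i ∈ Finset.range (k / l), (-1 : K) ^ i * y ^ p ^ (l * i)) ^ p ^ k) =
      iterateFrobenius K p k (∑ i ∈ Finset.range (k / l), (-1 : K) ^ i * y ^ p ^ (l * i)) := by
    rw [iterateFrobenius_def]
  rw [hφ, map_sum]
  refine Finset.sum_congr rfl fun i _ => ?_
  rw [map_mul, map_pow, map_neg, map_one, iterateFrobenius_def]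

private theorem aux_main [IsAlgClosed K] (l k : ℕ) (hl : 0 < l) (hk : 0 < k) (hlk : l ∣ k)
    (hodd : Odd (k / l)) :
    {x : K | ∑ i ∈ Finset.range (k / l), (-1 : K) ^ i * x ^ p ^ (l * i) = 0} =
      (fun x => (x + x ^ p ^ l) - (x + x ^ p ^ l) ^ p ^ k) '' {x : K | x ^ p ^ (2 * k) = x} := by
  classical
  have hp1 : 1 < p := (Fact.out : p.Prime).one_lt
  have hln : l * (k / l) = k := Nat.mul_div_cancel' hlk
  have hn1 : 1 ≤ k / l := hodd.pos
  set n := k / l with hn_def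
  set Ffun : K → K := fun x => (x + x ^ p ^ l) - (x + x ^ p ^ l) ^ p ^ k with hFfun
  have hF_sub : ∀ x y : K, Ffun (x - y) = Ffun x - Ffun y := by
    intro x y
    simp only [hFfun]
    rw [sub_pow_char_pow x y l]
    have h : (x - y + (x ^ p ^ l - y ^ p ^ l)) = (x + x ^ p ^ l) - (y + y ^ p ^ l) := by ring
    rw [h, sub_pow_char_pow]
    ring
  have hSF : ∀ x : K, x ^ p ^ (2 * k) = x →
      ∑ i ∈ Finset.range n, (-1 : K) ^ i * (Ffun x) ^ p ^ (l * i) = 0 := by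
    intro x hx
    simp only [hFfun]
    rw [hn_def, aux_smap_sub p l k (x + x ^ p ^ l), aux_smap_add p l k hlk hodd]
    have h2 : ((x + x ^ p ^ k) ^ p ^ k) = x ^ p ^ k + x ^ p ^ (2 * k) := by
      rw [add_pow_char_pow, ← pow_mul, ← pow_add, two_mul]
    rw [h2, hx]
    ring
  -- polynomials
  set PS : K[X] := ∑ i ∈ Finset.range n, C ((-1 : K) ^ i) * X ^ p ^ (l * i) with hPS
  have hPSeval : ∀ x : K, PS.eval x = ∑ i ∈ Finset.range n, (-1 : K) ^ i * x ^ p ^ (l * i) := by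
    intro x
    rw [hPS, eval_finset_sum]
    refine Finset.sum_congr rfl fun i _ => ?_
    simp
  have hPScoeff : PS.coeff 1 = 1 := by
    rw [hPS, finset_sum_coeff]
    rw [Finset.sum_eq_single 0]
    · simp
    · intro i _ hi
      have h1 : 1 < p ^ (l * i) := Nat.one_lt_pow (Nat.mul_ne_zero (by omega) hi) hp1
      rw [coeff_C_mul, coeff_X_pow, if_neg (Nat.ne_of_lt h1), mul_zero]
    · intro h
      exact absurd (Finset.mem_range.2 hn1) h
  have hPSne : PS ≠ 0 := fun h => by simp [h] at hPScoeff
  have hPSdeg : PS.natDegree ≤ p ^ (l * (n - 1)) := by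
    rw [hPS]
    refine natDegree_sum_le_of_forall_le _ _ fun i hi => ?_
    refine le_trans (natDegree_C_mul_le _ _) ?_
    rw [natDegree_X_pow]
    refine Nat.pow_le_pow_right (by omega) ?_
    have : i < n := Finset.mem_range.1 hi
    exact Nat.mul_le_mul_left l (by omega)
  set PF : K[X] := X + X ^ p ^ l - X ^ p ^ k - X ^ p ^ (k + l) with hPF
  have hPFeval : ∀ x : K, PF.eval x = Ffun x := by
    intro x
    have h1 : (x + x ^ p ^ l) ^ p ^ k = x ^ p ^ k + x ^ p ^ (k + l) := by
      rw [add_pow_char_pow, ← pow_mul, ← pow_add, Nat.add_comm l k]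
    simp only [hFfun]
    rw [h1, hPF]
    simp only [eval_sub, eval_add, eval_pow, eval_X]
    ring
  have hPFcoeff : PF.coeff 1 = 1 := by
    have e1 : 1 < p ^ l := Nat.one_lt_pow (by omega) hp1
    have e2 : 1 < p ^ k := Nat.one_lt_pow (by omega) hp1
    have e3 : 1 < p ^ (k + l) := Nat.one_lt_pow (by omega) hp1
    rw [hPF]
    simp [coeff_X_pow, Nat.ne_of_lt e1, Nat.ne_of_lt e2, Nat.ne_of_lt e3]
  have hPFne : PF ≠ 0 := fun h => by simp [h] at hPFcoeff
  have hPFdeg : PF.natDegree ≤ p ^ (k + l) := by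
    have b1 : (X : K[X]).natDegree ≤ p ^ (k + l) := by
      rw [natDegree_X]; exact Nat.one_le_pow _ _ (by omega)
    have b2 : ((X : K[X]) ^ p ^ l).natDegree ≤ p ^ (k + l) := by
      rw [natDegree_X_pow]; exact Nat.pow_le_pow_right (by omega) (by omega)
    have b3 : ((X : K[X]) ^ p ^ k).natDegree ≤ p ^ (k + l) := by
      rw [natDegree_X_pow]; exact Nat.pow_le_pow_right (by omega) (by omega)
    have b4 : ((X : K[X]) ^ p ^ (k + l)).natDegree ≤ p ^ (k + l) := by
      rw [natDegree_X_pow]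
    rw [hPF]
    refine le_trans (natDegree_sub_le _ _) ?_
    refine max_le (le_trans (natDegree_sub_le _ _) ?_) b4
    exact max_le (le_trans (natDegree_add_le _ _) (max_le b1 b2)) b3
  set PA : K[X] := X ^ p ^ (2 * k) - X with hPA
  have h2k : 1 < p ^ (2 * k) := Nat.one_lt_pow (by omega) hp1
  have hPAdeg : PA.natDegree = p ^ (2 * k) := by
    rw [hPA, natDegree_sub_eq_left_of_natDegree_lt, natDegree_X_pow]
    rw [natDegree_X, natDegree_X_pow]
    exact h2k
  have hPAne : PA ≠ 0 := fun h => by rw [h, natDegree_zero] at hPAdeg; omega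
  have hPAsep : PA.Separable := by
    rw [hPA]
    exact galois_poly_separable p (p ^ (2 * k)) (dvd_pow_self p (by omega))
  set Afin : Finset K := PA.roots.toFinset with hAfin
  have hAmem : ∀ x : K, x ∈ Afin ↔ x ^ p ^ (2 * k) = x := by
    intro x
    rw [hAfin, Multiset.mem_toFinset, mem_roots hPAne, IsRoot.def, hPA]
    simp [sub_eq_zero]
  have hAcard : Afin.card = p ^ (2 * k) := by
    rw [hAfin, Multiset.toFinset_card_of_nodup (nodup_roots hPAsep),
      splits_iff_card_roots.1 (IsAlgClosed.splits PA), hPAdeg]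
  set Zfin : Finset K := PS.roots.toFinset with hZfin
  have hZmem : ∀ x : K,
      x ∈ Zfin ↔ ∑ i ∈ Finset.range n, (-1 : K) ^ i * x ^ p ^ (l * i) = 0 := by
    intro x
    rw [hZfin, Multiset.mem_toFinset, mem_roots hPSne, IsRoot.def, hPSeval]
  have hZcard : Zfin.card ≤ p ^ (l * (n - 1)) :=
    le_trans (Multiset.toFinset_card_le _) (le_trans (card_roots' PS) hPSdeg)
  set I : Finset K := Afin.image Ffun with hI
  have hIsub : I ⊆ Zfin := by
    intro b hb
    rw [hI, Finset.mem_image] at hb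
    obtain ⟨a, ha, rfl⟩ := hb
    exact (hZmem _).2 (hSF a ((hAmem a).1 ha))
  have hfiber : ∀ b ∈ I, (Afin.filter (fun a => Ffun a = b)).card ≤ p ^ (k + l) := by
    intro b hb
    rw [hI, Finset.mem_image] at hb
    obtain ⟨a, _, rfl⟩ := hb
    calc (Afin.filter (fun t => Ffun t = Ffun a)).card
        ≤ PF.roots.toFinset.card := by
          refine Finset.card_le_card_of_injOn (fun t => t - a) ?_ ?_
          · intro t ht
            rw [Finset.mem_coe, Finset.mem_filter] at ht
            dsimp only
            rw [Finset.mem_coe]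
            rw [Multiset.mem_toFinset, mem_roots hPFne, IsRoot.def, hPFeval, hF_sub, ht.2,
              sub_self]
          · intro s _ t _ h
            exact sub_left_injective h
      _ ≤ p ^ (k + l) :=
          le_trans (Multiset.toFinset_card_le _) (le_trans (card_roots' PF) hPFdeg)
  have hcount : Afin.card ≤ p ^ (k + l) * I.card :=
    Finset.card_le_mul_card_image Afin (p ^ (k + l)) hfiber
  have hexp : (k + l) + l * (n - 1) = 2 * k := by
    have h1 : l * (n - 1) = l * n - l := by
      cases n with
      | zero => omega
      | succ m => simp [Nat.mul_succ]
    have h3 : l ≤ l * n := Nat.le_mul_of_pos_right l hn1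
    omega
  have hprod : p ^ (k + l) * p ^ (l * (n - 1)) = p ^ (2 * k) := by
    rw [← pow_add, hexp]
  have hIge : p ^ (l * (n - 1)) ≤ I.card := by
    have h0 : 0 < p ^ (k + l) := Nat.pow_pos (by omega)
    have h : p ^ (k + l) * p ^ (l * (n - 1)) ≤ p ^ (k + l) * I.card := by
      rw [hprod, ← hAcard]; exact hcount
    exact Nat.le_of_mul_le_mul_left h h0
  have hIZ : I = Zfin := Finset.eq_of_subset_of_card_le hIsub (le_trans hZcard hIge)
  have hA_set : (↑Afin : Set K) = {x : K | x ^ p ^ (2 * k) = x} := by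
    ext x
    rw [Finset.mem_coe, hAmem]
    rfl
  have hZ_set : {x : K | ∑ i ∈ Finset.range n, (-1 : K) ^ i * x ^ p ^ (l * i) = 0} =
      (↑Zfin : Set K) := by
    ext x
    rw [Finset.mem_coe, hZmem]
    rfl
  rw [hn_def] at hZ_set
  rw [hZ_set, ← hIZ, hI, Finset.coe_image, hA_set]

end Aux

theorem stmt7 (p : ℕ) [Fact p.Prime] (l k : ℕ) (hl : 0 < l) (hk : 0 < k) (hlk : l ∣ k)
    (hodd : Odd (k / l)) :
    {x : AlgebraicClosure (ZMod p) | Smap p l k x = 0} =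
      (fun x => (x + x ^ p ^ l) - (x + x ^ p ^ l) ^ p ^ k) '' Ffield p (2 * k) := by
  have h := aux_main (K := AlgebraicClosure (ZMod p)) p l k hl hk hlk hodd
  unfold Smap Ffield
  exact h
end

section
/- Let p be a prime, let n, k, l be positive integers with l | k, and set d = gcd(n,k), e = gcd(n,l), L = lcm(d,l). Then the set {x ∈ 𝔽_{p^n} : T_l^k(x) = 0} equals 𝔽_{p^d} if p divides k/L, and equals {x − x^{p^e} : x ∈ 𝔽_{p^d}} otherwise. Consequently its cardinality is p^d if p divides k/L, and p^{d−e} otherwise. -/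
open Finset

section aux

open Polynomial

variable {p : ℕ} [Fact p.Prime]

local notation "K" => AlgebraicClosure (ZMod p)

lemma pow_pow_add (x : K) (a b : ℕ) : x ^ p ^ (a + b) = (x ^ p ^ a) ^ p ^ b := by
  rw [← pow_mul, ← pow_add]

lemma fix_mul {x : K} {a : ℕ} (h : x ^ p ^ a = x) (c : ℕ) : x ^ p ^ (a * c) = x := by
  induction c with
  | zero => simp
  | succ c ih => rw [Nat.mul_succ, pow_pow_add, ih, h]

lemma fix_dvd {x : K} {a b : ℕ} (h : x ^ p ^ a = x) (hab : a ∣ b) : x ^ p ^ b = x := by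
  obtain ⟨c, rfl⟩ := hab; exact fix_mul h c

lemma fix_mod {x : K} {a : ℕ} (h : x ^ p ^ a = x) (b : ℕ) : x ^ p ^ b = x ^ p ^ (b % a) := by
  have h' : (x ^ p ^ (b % a)) ^ p ^ a = x ^ p ^ (b % a) := by
    rw [← pow_pow_add, Nat.add_comm, pow_pow_add, h]
  conv_lhs => rw [← Nat.div_add_mod b a]
  rw [Nat.add_comm, pow_pow_add, fix_mul h']

lemma fix_gcd {x : K} {a b : ℕ} (ha : x ^ p ^ a = x) (hb : x ^ p ^ b = x) :
    x ^ p ^ (Nat.gcd a b) = x := by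
  induction a, b using Nat.gcd.induction with
  | H0 b => simpa using hb
  | H1 a b hpos ih =>
    rw [Nat.gcd_rec]
    exact ih (by rw [← fix_mod ha b, hb]) ha

lemma ffield_eq_rootSet (m : ℕ) (hm : 0 < m) :
    Ffield p m = ((X : K[X]) ^ p ^ m - X).rootSet K := by
  have hne : ((X : K[X]) ^ p ^ m - X) ≠ 0 :=
    FiniteField.X_pow_card_pow_sub_X_ne_zero K hm.ne' (Fact.out : p.Prime).one_lt
  ext x
  simp [Ffield, mem_rootSet, hne, sub_eq_zero]

lemma ffield_finite (m : ℕ) (hm : 0 < m) : (Ffield p m).Finite := by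
  rw [ffield_eq_rootSet m hm]; exact Set.toFinite _

lemma ncard_ffield (m : ℕ) (hm : 0 < m) : (Ffield p m).ncard = p ^ m := by
  have h1 : ((X : K[X]) ^ p ^ m - X).Separable :=
    galois_poly_separable p (p ^ m) (dvd_pow_self p hm.ne')
  have h2 : (((X : K[X]) ^ p ^ m - X).map (algebraMap K K)).Splits := IsAlgClosed.splits _
  have h3 := card_rootSet_eq_natDegree h1 h2
  rw [ffield_eq_rootSet m hm, Set.ncard_eq_toFinset_card', Set.toFinset_card, h3,
    FiniteField.X_pow_card_pow_sub_X_natDegree_eq K hm.ne' (Fact.out : p.Prime).one_lt]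

/-- If `Tmap p l k x = 0` then `x ^ p ^ k = x`. -/
lemma tmap_zero_fix {k l : ℕ} (hl : 0 < l) (hlk : l ∣ k) {x : K}
    (hT : Tmap p l k x = 0) : x ^ p ^ k = x := by
  have hTk : Tmap p l k x ^ p ^ l - Tmap p l k x
      = x ^ p ^ (l * (k / l)) - x ^ p ^ (l * 0) := by
    rw [Tmap, sum_pow_char_pow, ← Finset.sum_sub_distrib,
      ← Finset.sum_range_sub (fun i => x ^ p ^ (l * i)) (k / l)]
    exact Finset.sum_congr rfl fun i _ => by rw [← pow_pow_add, Nat.mul_succ]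
  rw [hT, zero_pow (pow_ne_zero l (Nat.Prime.ne_zero Fact.out)), sub_zero,
    Nat.mul_div_cancel' hlk, Nat.mul_zero, pow_zero, pow_one] at hTk
  linear_combination -hTk

/-- Rearrangement: on `𝔽_{p^d}`, `Tmap p l k` is `q` times the trace `Tmap p e d`. -/
lemma tmap_eq_smul_trace {l k d e q : ℕ} (hl : 0 < l) (he : 0 < e) (hd : 0 < d)
    (hed : e ∣ d) (hel : e ∣ l) (hcop : Nat.Coprime (l / e) (d / e))
    (hkl : k / l = q * (d / e)) {x : K} (hx : x ^ p ^ d = x) :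
    Tmap p l k x = q • Tmap p e d x := by
  set P := d / e with hP
  have hPpos : 0 < P := Nat.div_pos (Nat.le_of_dvd hd hed) he
  have heP : e * P = d := Nat.mul_div_cancel' hed
  have hdlP : d ∣ l * P := by
    refine ⟨l / e, ?_⟩
    rw [← heP]
    calc l * P = e * (l / e) * P := by rw [Nat.mul_div_cancel' hel]
    _ = e * P * (l / e) := by ring
  -- one period rearrangement
  have hrearr : ∑ i ∈ range P, x ^ p ^ (l * i) = Tmap p e d x := by
    have key1 : ∀ i, x ^ p ^ (l * i) = x ^ p ^ (e * ((l / e * i) % P)) := by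
      intro i
      rw [fix_mod hx (l * i)]
      congr 1
      have h1 : l * i = e * (l / e * i) := by
        rw [← Nat.mul_assoc, Nat.mul_div_cancel' hel]
      rw [h1, ← heP]
      exact congrArg _ (Nat.mul_mod_mul_left e _ _)
    have hinj : Set.InjOn (fun i => (l / e * i) % P) (range P) := by
      intro i1 h1 i2 h2 h12
      simp only [Finset.coe_range, Set.mem_Iio] at h1 h2
      have hmeq : l / e * i1 ≡ l / e * i2 [MOD P] := h12
      have := Nat.ModEq.cancel_left_of_coprime (by rwa [Nat.coprime_comm] at hcop) hmeq
      rwa [Nat.ModEq, Nat.mod_eq_of_lt h1, Nat.mod_eq_of_lt h2] at this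
    have himg : Finset.image (fun i => (l / e * i) % P) (range P) = range P := by
      apply Finset.eq_of_subset_of_card_le
      · intro j hj
        simp only [Finset.mem_image, Finset.mem_range] at hj ⊢
        obtain ⟨i, _, rfl⟩ := hj
        exact Nat.mod_lt _ hPpos
      · rw [Finset.card_image_of_injOn hinj]
    calc ∑ i ∈ range P, x ^ p ^ (l * i)
        = ∑ i ∈ range P, x ^ p ^ (e * ((l / e * i) % P)) := Finset.sum_congr rfl fun i _ => key1 i
      _ = ∑ j ∈ (range P).image (fun i => (l / e * i) % P), x ^ p ^ (e * j) :=
          (Finset.sum_image (g := fun i => l / e * i % P) (f := fun j => x ^ p ^ (e * j)) (fun a ha b hb h =>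
            hinj (Finset.mem_coe.mpr ha) (Finset.mem_coe.mpr hb) h)).symm
      _ = ∑ j ∈ range P, x ^ p ^ (e * j) := by rw [himg]
      _ = Tmap p e d x := rfl
  -- periodicity
  have hper : ∀ c : ℕ, ∑ i ∈ range (c * P), x ^ p ^ (l * i)
      = c • ∑ i ∈ range P, x ^ p ^ (l * i) := by
    intro c
    induction c with
    | zero => simp
    | succ c ih =>
      rw [Nat.succ_mul, Finset.sum_range_add, ih, succ_nsmul]
      congr 1
      refine Finset.sum_congr rfl fun i _ => ?_
      have hdvd : d ∣ l * (c * P) := by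
        have h2 := hdlP.mul_right c
        rwa [show l * P * c = l * (c * P) by ring] at h2
      have h3 : l * (c * P + i) = l * (c * P) + l * i := by ring
      rw [h3, pow_pow_add, fix_dvd hx hdvd]
  rw [Tmap, hkl, hper q, hrearr]

/-- The kernel of the trace `Tmap p e d` on `𝔽_{p^d}` has at most `p^(d-e)` elements. -/
lemma trace_kernel_bound (e d : ℕ) (he : 0 < e) (hed : e ∣ d) (hd : 0 < d) :
    {x : K | x ∈ Ffield p d ∧ Tmap p e d x = 0}.Finite ∧
    {x : K | x ∈ Ffield p d ∧ Tmap p e d x = 0}.ncard ≤ p ^ (d - e) := by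
  classical
  set P := d / e with hP
  have hPpos : 0 < P := Nat.div_pos (Nat.le_of_dvd hd hed) he
  have heP : e * P = d := Nat.mul_div_cancel' hed
  have hexp : e * (P - 1) = d - e := by
    rw [← heP, Nat.mul_sub, Nat.mul_one]
  set Q : K[X] := ∑ j ∈ range P, (X : K[X]) ^ (p ^ (e * j)) with hQ
  have heval : ∀ x : K, Q.eval x = Tmap p e d x := by
    intro x
    rw [hQ, Polynomial.eval_finset_sum, Tmap]
    exact Finset.sum_congr rfl fun j _ => by simp
  have hQne : Q ≠ 0 := by
    intro h
    have hcoeff := congrArg (fun q : K[X] => q.coeff (p ^ (e * (P - 1)))) h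
    simp only [hQ, Polynomial.finset_sum_coeff, Polynomial.coeff_X_pow,
      Polynomial.coeff_zero] at hcoeff
    have hcond : ∀ j ∈ range P,
        (if p ^ (e * (P - 1)) = p ^ (e * j) then (1 : K) else 0)
        = if j = P - 1 then (1 : K) else 0 := by
      intro j hj
      have : (p ^ (e * (P - 1)) = p ^ (e * j)) ↔ (j = P - 1) := by
        constructor
        · intro hpe
          have := Nat.pow_right_injective (Nat.Prime.two_le (Fact.out : p.Prime)) hpe
          exact (Nat.eq_of_mul_eq_mul_left he this).symm
        · rintro rfl; rfl
      rw [if_congr this rfl rfl]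
    rw [Finset.sum_congr rfl hcond, Finset.sum_ite_eq' (range P) (P - 1) (fun _ => (1 : K))] at hcoeff
    have hmem : P - 1 ∈ range P := Finset.mem_range.mpr (by omega)
    rw [if_pos hmem] at hcoeff
    exact one_ne_zero hcoeff
  have hdeg : Q.natDegree ≤ p ^ (d - e) := by
    apply Polynomial.natDegree_sum_le_of_forall_le
    intro j hj
    rw [Polynomial.natDegree_X_pow]
    refine Nat.pow_le_pow_right (Nat.Prime.pos (Fact.out : p.Prime)) ?_
    rw [← hexp]
    exact Nat.mul_le_mul_left e (by have := Finset.mem_range.mp hj; omega)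
  have hsub : {x : K | x ∈ Ffield p d ∧ Tmap p e d x = 0} ⊆ (Q.roots.toFinset : Set K) := by
    intro x hx
    simp only [Finset.coe_sort_coe, Multiset.mem_toFinset, Finset.mem_coe]
    rw [Polynomial.mem_roots hQne, Polynomial.IsRoot, heval]
    exact hx.2
  have hfin : {x : K | x ∈ Ffield p d ∧ Tmap p e d x = 0}.Finite :=
    Set.Finite.subset (Q.roots.toFinset : Finset K).finite_toSet hsub
  refine ⟨hfin, ?_⟩
  calc {x : K | x ∈ Ffield p d ∧ Tmap p e d x = 0}.ncard
      ≤ (Q.roots.toFinset : Set K).ncard :=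
        Set.ncard_le_ncard hsub (Q.roots.toFinset : Finset K).finite_toSet
    _ = Q.roots.toFinset.card := Set.ncard_coe_finset _
    _ ≤ Multiset.card Q.roots := Multiset.toFinset_card_le _
    _ ≤ Q.natDegree := Polynomial.card_roots' Q
    _ ≤ p ^ (d - e) := hdeg

/-- The image of `x ↦ x - x^(p^e)` on `𝔽_{p^d}` has exactly `p^(d-e)` elements. -/
lemma ncard_image_sub_pow (e d : ℕ) (he : 0 < e) (hed : e ∣ d) (hd : 0 < d) :
    ((fun x : K => x - x ^ p ^ e) '' Ffield p d).ncard = p ^ (d - e) := by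
  classical
  have hpne : p ≠ 0 := Nat.Prime.ne_zero (Fact.out : p.Prime)
  set A : AddSubgroup K :=
    { carrier := Ffield p d
      zero_mem' := by
        simp [Ffield, zero_pow (pow_ne_zero d hpne)]
      add_mem' := by
        intro a b ha hb
        simp only [Ffield, Set.mem_setOf_eq] at *
        rw [add_pow_char_pow, ha, hb]
      neg_mem' := by
        intro a ha
        simp only [Ffield, Set.mem_setOf_eq] at *
        have hneg : (-a) ^ p ^ d = -(a ^ p ^ d) := by
          have := map_neg (iterateFrobenius K p d) a
          simpa [iterateFrobenius_def] using this
        rw [hneg, ha] } with hA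
  set ρ : A →+ K :=
    { toFun := fun a => (a : K) - (a : K) ^ p ^ e
      map_zero' := by simp [zero_pow (pow_ne_zero e hpne)]
      map_add' := by
        intro a b
        push_cast
        rw [add_pow_char_pow]
        ring } with hρ
  have hcardA : Nat.card A = p ^ d := by
    have h1 : Nat.card A = (Ffield p d).ncard := by
      rw [← Nat.card_coe_set_eq]
      rfl
    rw [h1, ncard_ffield d hd]
  have hker : Nat.card ρ.ker = p ^ e := by
    have hequiv : ρ.ker ≃ (Ffield p e : Set K) :=
      { toFun := fun z => ⟨(z : A), by
          have hz : ((z : A) : K) - ((z : A) : K) ^ p ^ e = 0 := z.2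
          exact (sub_eq_zero.mp hz).symm⟩
        invFun := fun w => ⟨⟨(w : K), fix_dvd w.2 hed⟩, by
          show ((w : K)) - ((w : K)) ^ p ^ e = 0
          rw [w.2, sub_self]⟩
        left_inv := fun z => by ext; rfl
        right_inv := fun w => by ext; rfl }
    rw [Nat.card_congr hequiv, Nat.card_coe_set_eq, ncard_ffield e he]
  have hrange : Nat.card ρ.range = p ^ (d - e) := by
    have h1 : Nat.card A = Nat.card (A ⧸ ρ.ker) * Nat.card ρ.ker :=
      AddSubgroup.card_eq_card_quotient_mul_card_addSubgroup ρ.ker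
    have h2 : Nat.card (A ⧸ ρ.ker) = Nat.card ρ.range :=
      Nat.card_congr (QuotientAddGroup.quotientKerEquivRange ρ).toEquiv
    have h3 : p ^ (d - e) * p ^ e = p ^ d := by
      rw [← pow_add, Nat.sub_add_cancel (Nat.le_of_dvd hd hed)]
    have h4 : Nat.card ρ.range * p ^ e = p ^ (d - e) * p ^ e := by
      rw [h3, ← hcardA, h1, h2, hker]
    exact Nat.eq_of_mul_eq_mul_right (Nat.pow_pos (n := e) (Nat.Prime.pos Fact.out)) h4
  have hset : (fun x : K => x - x ^ p ^ e) '' Ffield p d = (ρ.range : Set K) := by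
    ext y
    constructor
    · rintro ⟨x, hx, rfl⟩
      exact ⟨⟨x, hx⟩, rfl⟩
    · rintro ⟨a, rfl⟩
      exact ⟨(a : K), a.2, rfl⟩
  rw [hset, ← Nat.card_coe_set_eq]
  rw [SetLike.coe_sort_coe]
  exact hrange

end aux

theorem stmt8 (p : ℕ) [Fact p.Prime] (n k l : ℕ) (hn : 0 < n) (hk : 0 < k) (hl : 0 < l)
    (hlk : l ∣ k) (d e L : ℕ)
    (hd : d = Nat.gcd n k) (he : e = Nat.gcd n l) (hL : L = Nat.lcm d l) :
    (p ∣ k / L →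
      {x | x ∈ Ffield p n ∧ Tmap p l k x = 0} = Ffield p d ∧
      {x | x ∈ Ffield p n ∧ Tmap p l k x = 0}.ncard = p ^ d) ∧
    (¬ p ∣ k / L →
      {x | x ∈ Ffield p n ∧ Tmap p l k x = 0} = (fun x => x - x ^ p ^ e) '' Ffield p d ∧
      {x | x ∈ Ffield p n ∧ Tmap p l k x = 0}.ncard = p ^ (d - e)) := by
  have hd0 : 0 < d := hd ▸ Nat.gcd_pos_of_pos_left _ hn
  have he0 : 0 < e := he ▸ Nat.gcd_pos_of_pos_left _ hn
  have hdn : d ∣ n := hd ▸ Nat.gcd_dvd_left _ _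
  have hdk : d ∣ k := hd ▸ Nat.gcd_dvd_right _ _
  have hen : e ∣ n := he ▸ Nat.gcd_dvd_left _ _
  have hel : e ∣ l := he ▸ Nat.gcd_dvd_right _ _
  have hek : e ∣ k := hel.trans hlk
  have hedvd : e ∣ d := hd ▸ Nat.dvd_gcd hen hek
  have hgcdld : Nat.gcd l d = e := by
    rw [Nat.gcd_comm l d, hd, Nat.gcd_assoc, Nat.gcd_eq_right hlk, ← he]
  have hcop : Nat.Coprime (l / e) (d / e) := by
    have h := Nat.coprime_div_gcd_div_gcd (m := l) (n := d) (by rw [hgcdld]; exact he0)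
    rwa [hgcdld] at h
  have hdL : d ∣ L := hL ▸ Nat.dvd_lcm_left _ _
  have hlL : l ∣ L := hL ▸ Nat.dvd_lcm_right _ _
  have hLk : L ∣ k := hL ▸ Nat.lcm_dvd hdk hlk
  have hL0 : 0 < L := Nat.pos_of_dvd_of_pos hLk hk
  have hLl : L = l * (d / e) := by
    rw [hL, Nat.lcm, Nat.gcd_comm d l, hgcdld, Nat.mul_comm d l, Nat.mul_div_assoc l hedvd]
  have hq : k / l = (k / L) * (d / e) := by
    obtain ⟨a, ha⟩ := hLk
    have h1 : k / L = a := by rw [ha, Nat.mul_div_cancel_left a hL0]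
    have h2 : k / l = (d / e) * a := by
      rw [ha, hLl, Nat.mul_assoc, Nat.mul_div_cancel_left _ hl]
    rw [h2, h1, Nat.mul_comm]
  have hformula : ∀ x : AlgebraicClosure (ZMod p), x ∈ Ffield p d →
      Tmap p l k x = (k / L) • Tmap p e d x := fun x hx =>
    tmap_eq_smul_trace hl he0 hd0 hedvd hel hcop hq hx
  have hSsub : {x | x ∈ Ffield p n ∧ Tmap p l k x = 0} ⊆ Ffield p d := by
    rintro x ⟨hxn, hxT⟩
    have hk' := tmap_zero_fix hl hlk hxT
    exact hd ▸ fix_gcd hxn hk'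
  constructor
  · intro hdvd
    have hcast : ((k / L : ℕ) : AlgebraicClosure (ZMod p)) = 0 :=
      (CharP.cast_eq_zero_iff _ p _).mpr hdvd
    have hEq : {x | x ∈ Ffield p n ∧ Tmap p l k x = 0} = Ffield p d := by
      apply Set.Subset.antisymm hSsub
      intro x hx
      refine ⟨fix_dvd hx hdn, ?_⟩
      rw [hformula x hx, nsmul_eq_mul, hcast, zero_mul]
    exact ⟨hEq, by rw [hEq, ncard_ffield d hd0]⟩
  · intro hndvd
    have hcast : ((k / L : ℕ) : AlgebraicClosure (ZMod p)) ≠ 0 := by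
      intro h; exact hndvd ((CharP.cast_eq_zero_iff _ p _).mp h)
    have hSeq : {x | x ∈ Ffield p n ∧ Tmap p l k x = 0}
        = {x | x ∈ Ffield p d ∧ Tmap p e d x = 0} := by
      ext x
      constructor
      · rintro ⟨hxn, hxT⟩
        have hxd := hSsub ⟨hxn, hxT⟩
        refine ⟨hxd, ?_⟩
        have h := hformula x hxd
        rw [hxT, nsmul_eq_mul] at h
        exact (mul_eq_zero.mp h.symm).resolve_left hcast
      · rintro ⟨hxd, hxt⟩
        exact ⟨fix_dvd hxd hdn, by rw [hformula x hxd, hxt, smul_zero]⟩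
    have himsub : (fun x => x - x ^ p ^ e) '' Ffield p d
        ⊆ {x | x ∈ Ffield p n ∧ Tmap p l k x = 0} := by
      rintro _ ⟨x, hx, rfl⟩
      rw [hSeq]
      have hxe : (x ^ p ^ e) ^ p ^ d = x ^ p ^ e := by
        rw [← pow_pow_add, Nat.add_comm, pow_pow_add, hx]
      have hmem : x - x ^ p ^ e ∈ Ffield p d := by
        show (x - x ^ p ^ e) ^ p ^ d = x - x ^ p ^ e
        rw [sub_pow_char_pow, hx, hxe]
      refine ⟨hmem, ?_⟩
      have heP : e * (d / e) = d := Nat.mul_div_cancel' hedvd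
      calc Tmap p e d (x - x ^ p ^ e)
          = ∑ j ∈ Finset.range (d / e), (x ^ p ^ (e * j) - x ^ p ^ (e * (j + 1))) := by
            rw [Tmap]
            refine Finset.sum_congr rfl fun j _ => ?_
            rw [sub_pow_char_pow]
            congr 1
            rw [← pow_pow_add]
            have h3 : e + e * j = e * (j + 1) := by ring
            rw [h3]
        _ = x ^ p ^ (e * 0) - x ^ p ^ (e * (d / e)) :=
            Finset.sum_range_sub' (fun j => x ^ p ^ (e * j)) (d / e)
        _ = 0 := by rw [heP, hx, Nat.mul_zero, pow_zero, pow_one, sub_self]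
    obtain ⟨hfin, hbound⟩ := trace_kernel_bound (p := p) e d he0 hedvd hd0
    have him := ncard_image_sub_pow (p := p) e d he0 hedvd hd0
    have hEq : (fun x => x - x ^ p ^ e) '' Ffield p d
        = {x | x ∈ Ffield p n ∧ Tmap p l k x = 0} := by
      apply Set.eq_of_subset_of_ncard_le himsub ?_ ?_
      · rw [hSeq, him]; exact hbound
      · rw [hSeq]; exact hfin
    exact ⟨hEq.symm, by rw [← hEq, him]⟩
end

section
/- Let p be an odd prime, let n, k, l be positive integers with l | k and k/l even, and set d = gcd(n,k), e = gcd(n,l), L = lcm(d,l). Suppose that either d/e is odd, or d/e is even and p divides k/L. Let a ∈ 𝔽_{p^n}. Then the equation S_l^k(X) = a has a solution in 𝔽_{p^n} if and only if T_d^n(a) = 0. Moreover, in that case, for any δ ∈ 𝔽_{p^n} with T_d^n(δ) = 1, the element x₀ = T_l^{2l}( Σ_{i=0}^{n/d−2} Σ_{j=i+1}^{n/d−1} δ^{p^{kj}} a^{p^{ki}} ) lies in 𝔽_{p^n} and satisfies S_l^k(x₀) = a. -/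
open Finset

section SKHelpers
variable {p : ℕ} [Fact p.Prime]
local notation "K" => AlgebraicClosure (ZMod p)

private lemma SK.ppow_ppow (x : K) (s t : ℕ) : (x ^ p ^ s) ^ p ^ t = x ^ p ^ (s + t) := by
  rw [← pow_mul, ← pow_add]

private lemma SK.sum_ppow {ι : Type*} (S : Finset ι) (f : ι → K) (t : ℕ) :
    (∑ i ∈ S, f i) ^ p ^ t = ∑ i ∈ S, f i ^ p ^ t := by
  rw [← iterateFrobenius_def (R := K) p t, map_sum]
  simp only [iterateFrobenius_def]

private lemma SK.add_ppow (x y : K) (t : ℕ) : (x + y) ^ p ^ t = x ^ p ^ t + y ^ p ^ t := by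
  rw [← iterateFrobenius_def (R := K) p t, map_add]
  simp only [iterateFrobenius_def]

private lemma SK.neg_one_ppow (t : ℕ) : ((-1 : K)) ^ p ^ t = -1 := by
  rw [← iterateFrobenius_def (R := K) p t, map_neg, map_one]

private lemma SK.neg_one_pow_mul_ppow (i t : ℕ) (z : K) :
    ((-1 : K) ^ i * z) ^ p ^ t = (-1 : K) ^ i * z ^ p ^ t := by
  rw [mul_pow, ← pow_mul, mul_comm i (p ^ t), pow_mul, SK.neg_one_ppow]

private lemma SK.fixed_mul {x : K} {n : ℕ} (hx : x ^ p ^ n = x) (t : ℕ) :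
    x ^ p ^ (n * t) = x := by
  induction t with
  | zero => simp
  | succ t ih =>
    have h : n * (t + 1) = n * t + n := by ring
    rw [h, ← SK.ppow_ppow, ih, hx]

private lemma SK.fixed_ppow {x : K} {n : ℕ} (hx : x ^ p ^ n = x) (s : ℕ) :
    (x ^ p ^ s) ^ p ^ n = x ^ p ^ s := by
  rw [SK.ppow_ppow, add_comm, ← SK.ppow_ppow, hx]

private lemma SK.fixed_mod {x : K} {n : ℕ} (hx : x ^ p ^ n = x) (j : ℕ) :
    x ^ p ^ j = x ^ p ^ (j % n) := by
  have h : x ^ p ^ (n * (j / n)) = x := SK.fixed_mul hx _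
  conv_lhs => rw [← Nat.div_add_mod j n, ← SK.ppow_ppow, h]

private lemma SK.sum_shift_cyclic {M : Type*} [AddCommGroup M] (g : ℕ → M) (m : ℕ)
    (h : g m = g 0) : ∑ i ∈ range m, g (i + 1) = ∑ i ∈ range m, g i := by
  have h1 := Finset.sum_range_succ' g m
  rw [Finset.sum_range_succ g m, h] at h1
  exact (add_right_cancel h1).symm

private lemma SK.trace_k_eq_d {x : K} {n k : ℕ} (hn : 0 < n) (hx : x ^ p ^ n = x) :
    ∑ i ∈ range (n / Nat.gcd n k), x ^ p ^ (k * i) =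
    ∑ i ∈ range (n / Nat.gcd n k), x ^ p ^ (Nat.gcd n k * i) := by
  set d := Nat.gcd n k with hd
  set m := n / d with hmdef
  have hd0 : 0 < d := Nat.gcd_pos_of_pos_left k hn
  have hdn : d ∣ n := Nat.gcd_dvd_left n k
  have hdk : d ∣ k := Nat.gcd_dvd_right n k
  have hm0 : 0 < m := Nat.div_pos (Nat.le_of_dvd hn hdn) hd0
  have hnm : d * m = n := Nat.mul_div_cancel' hdn
  have hcop : Nat.Coprime m (k / d) := Nat.coprime_div_gcd_div_gcd (m := n) (n := k) hd0
  have hterm : ∀ i : ℕ, x ^ p ^ (k * i) = x ^ p ^ (d * ((k / d * i) % m)) := by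
    intro i
    rw [SK.fixed_mod hx (k * i), ← hnm]
    congr 2
    have h : k * i = d * (k / d * i) := by
      rw [← mul_assoc, Nat.mul_div_cancel' hdk]
    rw [h, Nat.mul_mod_mul_left]
  have hinj : ∀ (a₁ a₂ : ℕ), a₁ ∈ range m → a₂ ∈ range m →
      (k / d * a₁) % m = (k / d * a₂) % m → a₁ = a₂ := by
    intro a₁ a₂ h₁ h₂ h
    have hmod : a₁ ≡ a₂ [MOD m] := Nat.ModEq.cancel_left_of_coprime hcop h
    rw [Nat.ModEq, Nat.mod_eq_of_lt (mem_range.mp h₁), Nat.mod_eq_of_lt (mem_range.mp h₂)] at hmod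
    exact hmod
  calc ∑ i ∈ range m, x ^ p ^ (k * i)
      = ∑ i ∈ range m, x ^ p ^ (d * ((k / d * i) % m)) :=
        Finset.sum_congr rfl fun i _ => hterm i
    _ = ∑ i ∈ range m, x ^ p ^ (d * i) := by
        apply Finset.sum_bij (fun i _ => (k / d * i) % m)
        · intro i _
          exact mem_range.mpr (Nat.mod_lt _ hm0)
        · intro a₁ h₁ a₂ h₂ h
          exact hinj a₁ a₂ h₁ h₂ h
        · intro b hb
          obtain ⟨a, ha, hab⟩ := Finset.surj_on_of_inj_on_of_card_le
            (fun i (_ : i ∈ range m) => (k / d * i) % m)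
            (fun i _ => mem_range.mpr (Nat.mod_lt _ hm0)) hinj le_rfl b hb
          exact ⟨a, ha, hab.symm⟩
        · intro i _
          rfl

private lemma SK.sum_block (q r : ℕ) (G : ℕ → K) (hG : ∀ j s, s < r → G (j * r + s) = G s) :
    ∑ i ∈ range (q * r), (-1 : K) ^ i * G i
      = (∑ j ∈ range q, (-1 : K) ^ (r * j)) * ∑ s ∈ range r, (-1 : K) ^ s * G s := by
  induction q with
  | zero => simp
  | succ q ih =>
    have h : (q + 1) * r = q * r + r := by ring
    rw [h, Finset.sum_range_add, ih, Finset.sum_range_succ, add_mul]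
    congr 1
    rw [Finset.mul_sum]
    apply Finset.sum_congr rfl
    intro s hs
    rw [hG q s (mem_range.mp hs), pow_add, mul_assoc, mul_comm r q]

private lemma SK.sum_neg_one_pow_even {q : ℕ} (hq : Even q) :
    ∑ j ∈ range q, (-1 : K) ^ j = 0 := by
  obtain ⟨u, rfl⟩ := hq
  induction u with
  | zero => simp
  | succ u ih =>
    have h : u + 1 + (u + 1) = u + u + 1 + 1 := by ring
    rw [h, sum_range_succ, sum_range_succ, ih]
    rw [Even.neg_one_pow (⟨u, rfl⟩ : Even (u + u)),
      Odd.neg_one_pow (⟨u, by ring⟩ : Odd (u + u + 1))]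
    ring

private lemma SK.S_vanish (k l d e Lc : ℕ) (hl0 : 0 < l) (hd0 : 0 < d)
    (he : e = Nat.gcd d l) (hLc : Lc = Nat.lcm d l) (hlk : l ∣ k) (hdk : d ∣ k)
    (hkl : Even (k / l))
    (hcase : Odd (d / e) ∨ (Even (d / e) ∧ p ∣ k / Lc))
    (t : K) (ht : t ^ p ^ d = t) :
    ∑ i ∈ range (k / l), (-1 : K) ^ i * t ^ p ^ (l * i) = 0 := by
  set r := d / e with hr
  set q := k / Lc with hq
  have hed : e ∣ d := by rw [he]; exact Nat.gcd_dvd_left d l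
  have hLr : Lc = l * r := by
    have h1 : Nat.lcm d l = l * (d / Nat.gcd d l) := by
      rw [Nat.lcm, mul_comm d l, Nat.mul_div_assoc l (Nat.gcd_dvd_left d l)]
    rw [hLc, h1, hr, he]
  have hdL : d ∣ Lc := hLc ▸ Nat.dvd_lcm_left d l
  have hLk : Lc ∣ k := hLc ▸ Nat.lcm_dvd hdk hlk
  have hql : k / l = q * r := by
    have hk : k = Lc * q := (Nat.mul_div_cancel' hLk).symm
    rw [hk, hLr, mul_assoc, Nat.mul_div_cancel_left _ hl0, mul_comm]
  have htL : t ^ p ^ Lc = t := by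
    obtain ⟨s, hs⟩ := hdL
    rw [hs]; exact SK.fixed_mul ht s
  have hG : ∀ j s, s < r → t ^ p ^ (l * (j * r + s)) = t ^ p ^ (l * s) := by
    intro j s _
    have h1 : l * (j * r + s) = Lc * j + l * s := by rw [hLr]; ring
    rw [h1, ← SK.ppow_ppow, SK.fixed_mul htL j]
  rw [hql, SK.sum_block q r _ hG]
  rcases hcase with hodd | ⟨heven, hpq⟩
  · have hqe : Even q := by
      rw [hql] at hkl
      rcases Nat.even_mul.mp hkl with h | h
      · exact h
      · exact absurd h (Nat.not_even_iff_odd.mpr hodd)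
    have h0 : ∑ j ∈ range q, (-1 : K) ^ (r * j) = 0 := by
      calc ∑ j ∈ range q, (-1 : K) ^ (r * j) = ∑ j ∈ range q, (-1 : K) ^ j := by
            apply Finset.sum_congr rfl
            intro j _
            rw [pow_mul, Odd.neg_one_pow hodd]
        _ = 0 := SK.sum_neg_one_pow_even hqe
    rw [h0, zero_mul]
  · have h0 : ∑ j ∈ range q, (-1 : K) ^ (r * j) = 0 := by
      calc ∑ j ∈ range q, (-1 : K) ^ (r * j) = ∑ j ∈ range q, (1 : K) := by
            apply Finset.sum_congr rfl
            intro j _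
            exact Even.neg_one_pow (heven.mul_right j)
        _ = (q : K) := by simp
        _ = 0 := (CharP.cast_eq_zero_iff K p q).mpr hpq
    rw [h0, zero_mul]

private lemma SK.exists_delta (d m : ℕ) (hd : 0 < d) (hm : 0 < m) :
    ∃ δ : K, δ ^ p ^ (d * m) = δ ∧ ∑ i ∈ range m, δ ^ p ^ (d * i) = 1 := by
  have hp2 : 2 ≤ p := (Fact.out : p.Prime).two_le
  set P : Polynomial K :=
    (∑ i ∈ range m, Polynomial.X ^ p ^ (d * i)) - Polynomial.C 1 with hP
  have hNpos : 0 < p ^ (d * (m - 1)) := Nat.pow_pos (by omega)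
  have hco : P.coeff (p ^ (d * (m - 1))) = 1 := by
    rw [hP, Polynomial.coeff_sub, Polynomial.finset_sum_coeff]
    rw [Polynomial.coeff_C, if_neg (by omega)]
    rw [Finset.sum_eq_single (m - 1)]
    · rw [Polynomial.coeff_X_pow, if_pos rfl]; ring
    · intro i hi hne
      rw [Polynomial.coeff_X_pow, if_neg]
      intro hEq
      apply hne
      have h := Nat.pow_right_injective hp2 hEq
      exact (Nat.eq_of_mul_eq_mul_left hd h).symm
    · intro h
      exact absurd (mem_range.mpr (by omega)) h
  have hdeg : P.degree ≠ 0 := by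
    intro h0
    have h1 : ((p ^ (d * (m - 1)) : ℕ) : WithBot ℕ) ≤ P.degree :=
      Polynomial.le_degree_of_ne_zero (hco ▸ one_ne_zero)
    rw [h0] at h1
    have h2 : (p ^ (d * (m - 1)) : ℕ) ≤ 0 := by exact_mod_cast h1
    omega
  obtain ⟨δ, hroot⟩ := IsAlgClosed.exists_root P hdeg
  have heval : ∑ i ∈ range m, δ ^ p ^ (d * i) = 1 := by
    have h := hroot
    rw [Polynomial.IsRoot, hP] at h
    rw [Polynomial.eval_sub, Polynomial.eval_finset_sum] at h
    simp only [Polynomial.eval_pow, Polynomial.eval_X, Polynomial.eval_C] at h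
    exact sub_eq_zero.mp h
  refine ⟨δ, ?_, heval⟩
  set g : ℕ → K := fun i => δ ^ p ^ (d * i) with hg
  have h2 : ∑ i ∈ range m, g (i + 1) = 1 := by
    have h := congrArg (fun z : K => z ^ p ^ d) heval
    simp only [one_pow] at h
    rw [SK.sum_ppow] at h
    calc ∑ i ∈ range m, g (i + 1) = ∑ i ∈ range m, (δ ^ p ^ (d * i)) ^ p ^ d := by
          apply Finset.sum_congr rfl
          intro i _
          rw [SK.ppow_ppow]
          simp only [hg, Nat.mul_succ]
      _ = 1 := h
  have h3 := Finset.sum_range_succ' g m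
  rw [Finset.sum_range_succ g m, heval, h2] at h3
  have hgm : g m = g 0 := add_left_cancel h3
  simpa [hg] using hgm

private lemma SK.construction (k l m : ℕ) (hl : 0 < l) (hm : 0 < m) (hlk : l ∣ k)
    (hN : Even (k / l))
    (a δ : K) (hafix : a ^ p ^ (k * m) = a) (hδfix : δ ^ p ^ (k * m) = δ)
    (hTa : ∑ i ∈ range m, a ^ p ^ (k * i) = 0)
    (hTδ : ∑ i ∈ range m, δ ^ p ^ (k * i) = 1)
    (y : K)
    (hy : y = ∑ i ∈ range (m - 1), ∑ j ∈ Ico (i + 1) m, δ ^ p ^ (k * j) * a ^ p ^ (k * i)) :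
    y ^ p ^ k = y - a ∧
      ∑ i ∈ range (k / l), (-1 : K) ^ i * (y + y ^ p ^ l) ^ p ^ (l * i) = a := by
  have h5 : m - 1 + 1 = m := by omega
  have hysum : y = ∑ i ∈ range (m - 1),
      (∑ j ∈ Ico (i + 1) m, δ ^ p ^ (k * j)) * a ^ p ^ (k * i) := by
    rw [hy]
    exact Finset.sum_congr rfl fun i _ => (Finset.sum_mul _ _ _).symm
  have hAsucc : ∀ i : ℕ, (a ^ p ^ (k * i)) ^ p ^ k = a ^ p ^ (k * (i + 1)) := by
    intro i
    rw [SK.ppow_ppow]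
    congr 2 <;> ring
  have hDsucc : ∀ j : ℕ, (δ ^ p ^ (k * j)) ^ p ^ k = δ ^ p ^ (k * (j + 1)) := by
    intro j
    rw [SK.ppow_ppow]
    congr 2 <;> ring
  have hDm : δ ^ p ^ (k * m) = δ := hδfix
  have hBsucc : ∀ i, i < m - 1 →
      (∑ j ∈ Ico (i + 1) m, δ ^ p ^ (k * j)) ^ p ^ k
        = (∑ j ∈ Ico (i + 1 + 1) m, δ ^ p ^ (k * j)) + δ := by
    intro i hi
    rw [SK.sum_ppow]
    rw [Finset.sum_congr rfl fun j _ => hDsucc j]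
    rw [Finset.sum_Ico_eq_sum_range, Finset.sum_Ico_eq_sum_range]
    have h2 : m - (i + 1) = (m - (i + 2)) + 1 := by omega
    rw [h2, Finset.sum_range_succ]
    have h3 : k * (i + 1 + (m - (i + 2)) + 1) = k * m := by
      have h4 : i + 1 + (m - (i + 2)) + 1 = m := by omega
      rw [h4]
    rw [h3, hDm]
    congr 1
    apply Finset.sum_congr rfl
    intro x _
    congr 2 <;> ring
  have hpart1 : y ^ p ^ k = y - a := by
    rw [hysum, SK.sum_ppow]
    have h1 : ∀ i ∈ range (m - 1),
        ((∑ j ∈ Ico (i + 1) m, δ ^ p ^ (k * j)) * a ^ p ^ (k * i)) ^ p ^ k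
          = (∑ j ∈ Ico (i + 1 + 1) m, δ ^ p ^ (k * j)) * a ^ p ^ (k * (i + 1))
            + δ * a ^ p ^ (k * (i + 1)) := by
      intro i hi
      rw [mul_pow, hAsucc i, hBsucc i (mem_range.mp hi), add_mul]
    rw [Finset.sum_congr rfl h1, Finset.sum_add_distrib, ← Finset.mul_sum]
    set E : ℕ → K := fun i => (∑ j ∈ Ico (i + 1) m, δ ^ p ^ (k * j)) * a ^ p ^ (k * i) with hE
    set A : ℕ → K := fun i => a ^ p ^ (k * i) with hA
    have hEm : E (m - 1) = 0 := by
      simp only [hE, h5, Finset.Ico_self, Finset.sum_empty, zero_mul]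
    have eqE1 : ∑ i ∈ range m, E i = ∑ i ∈ range (m - 1), E (i + 1) + E 0 := by
      rw [← h5]; exact Finset.sum_range_succ' E (m - 1)
    have eqE2 : ∑ i ∈ range m, E i = ∑ i ∈ range (m - 1), E i + E (m - 1) := by
      rw [← h5]; exact Finset.sum_range_succ E (m - 1)
    have eqA1 : ∑ i ∈ range m, A i = ∑ i ∈ range (m - 1), A (i + 1) + A 0 := by
      rw [← h5]; exact Finset.sum_range_succ' A (m - 1)
    have hTA : ∑ i ∈ range m, A i = 0 := hTa
    have hA0 : A 0 = a := by simp [hA]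
    have hE0 : E 0 = (1 - δ) * a := by
      have h7 : ∑ j ∈ range m, δ ^ p ^ (k * j) = ∑ j ∈ Ico 0 m, δ ^ p ^ (k * j) := by
        rw [Finset.range_eq_Ico]
      have h6 : ∑ j ∈ Ico 0 m, δ ^ p ^ (k * j)
          = δ ^ p ^ (k * 0) + ∑ j ∈ Ico 1 m, δ ^ p ^ (k * j) :=
        Finset.sum_eq_sum_Ico_succ_bot hm _
      have hδ0 : δ ^ p ^ (k * 0) = δ := by simp
      have hB0 : ∑ j ∈ Ico 1 m, δ ^ p ^ (k * j) = 1 - δ := by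
        linear_combination hTδ - h7 - h6 + hδ0
      simp only [hE, zero_add, hB0]
      simp
    have hsA : ∑ i ∈ range (m - 1), A (i + 1) = -a := by
      linear_combination -eqA1 + hTA - hA0
    have hrw1 : ∑ i ∈ range (m - 1),
        (∑ j ∈ Ico (i + 1 + 1) m, δ ^ p ^ (k * j)) * a ^ p ^ (k * (i + 1))
          = ∑ i ∈ range (m - 1), E (i + 1) := rfl
    have hrw2 : ∑ i ∈ range (m - 1), a ^ p ^ (k * (i + 1))
          = ∑ i ∈ range (m - 1), A (i + 1) := rfl
    rw [hrw1, hrw2]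
    clear_value E A
    show _ = (∑ i ∈ range (m - 1), E i) - a
    linear_combination (-eqE1) + eqE2 + hEm - hE0 + (δ : K) * hsA
  refine ⟨hpart1, ?_⟩
  have hterm : ∀ i ∈ range (k / l),
      (-1 : K) ^ i * (y + y ^ p ^ l) ^ p ^ (l * i)
        = (fun i => (-1 : K) ^ i * y ^ p ^ (l * i)) i
          - (fun i => (-1 : K) ^ i * y ^ p ^ (l * i)) (i + 1) := by
    intro i _
    simp only
    rw [SK.add_ppow, SK.ppow_ppow]
    have h8 : l + l * i = l * (i + 1) := by ring
    rw [h8, pow_succ]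
    ring
  rw [Finset.sum_congr rfl hterm, Finset.sum_range_sub']
  simp only [pow_zero, mul_zero, one_mul]
  rw [Even.neg_one_pow hN, one_mul, Nat.mul_div_cancel' hlk, hpart1]
  ring

end SKHelpers

theorem stmt15 (p : ℕ) [Fact p.Prime] (hp2 : p ≠ 2) (n k l : ℕ)
    (hn : 0 < n) (hk : 0 < k) (hl : 0 < l)
    (hlk : l ∣ k) (hkl : Even (k / l)) (d e L : ℕ)
    (hd : d = Nat.gcd n k) (he : e = Nat.gcd n l) (hL : L = Nat.lcm d l)
    (hcase : Odd (d / e) ∨ (Even (d / e) ∧ p ∣ k / L))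
    (a : AlgebraicClosure (ZMod p)) (ha : a ∈ Ffield p n) :
    ((∃ x ∈ Ffield p n, Smap p l k x = a) ↔ Tmap p d n a = 0) ∧
    (Tmap p d n a = 0 → ∀ δ ∈ Ffield p n, Tmap p d n δ = 1 →
      ∀ x₀, x₀ = Tmap p l (2 * l) (∑ i ∈ Finset.range (n / d - 1),
          ∑ j ∈ Finset.Ico (i + 1) (n / d), δ ^ p ^ (k * j) * a ^ p ^ (k * i)) →
        x₀ ∈ Ffield p n ∧ Smap p l k x₀ = a) := by
  subst hd he hL
  have hd0 : 0 < Nat.gcd n k := Nat.gcd_pos_of_pos_left k hn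
  have hdn : Nat.gcd n k ∣ n := Nat.gcd_dvd_left n k
  have hdk : Nat.gcd n k ∣ k := Nat.gcd_dvd_right n k
  have hm0 : 0 < n / Nat.gcd n k := Nat.div_pos (Nat.le_of_dvd hn hdn) hd0
  have hnm : Nat.gcd n k * (n / Nat.gcd n k) = n := Nat.mul_div_cancel' hdn
  have ha' : a ^ p ^ n = a := ha
  have hkmfix : ∀ x : AlgebraicClosure (ZMod p), x ^ p ^ n = x →
      x ^ p ^ (k * (n / Nat.gcd n k)) = x := by
    intro x hx
    have h : k * (n / Nat.gcd n k) = n * (k / Nat.gcd n k) := by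
      rw [← Nat.mul_div_assoc k hdn, ← Nat.mul_div_assoc n hdk, mul_comm n k]
    rw [h]
    exact SK.fixed_mul hx _
  -- Part 2 (the explicit solution)
  have key2 : Tmap p (Nat.gcd n k) n a = 0 → ∀ δ ∈ Ffield p n, Tmap p (Nat.gcd n k) n δ = 1 →
      ∀ x₀, x₀ = Tmap p l (2 * l) (∑ i ∈ Finset.range (n / Nat.gcd n k - 1),
          ∑ j ∈ Finset.Ico (i + 1) (n / Nat.gcd n k), δ ^ p ^ (k * j) * a ^ p ^ (k * i)) →
        x₀ ∈ Ffield p n ∧ Smap p l k x₀ = a := by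
    intro hTa0 δ hδmem hTδ1 x₀ hx₀
    have hδ' : δ ^ p ^ n = δ := hδmem
    have hTa' : ∑ i ∈ Finset.range (n / Nat.gcd n k), a ^ p ^ (k * i) = 0 := by
      rw [SK.trace_k_eq_d hn ha']
      simpa [Tmap] using hTa0
    have hTδ' : ∑ i ∈ Finset.range (n / Nat.gcd n k), δ ^ p ^ (k * i) = 1 := by
      rw [SK.trace_k_eq_d hn hδ']
      simpa [Tmap] using hTδ1
    obtain ⟨hyk, hS⟩ := SK.construction k l (n / Nat.gcd n k) hl hm0 hlk hkl a δ
      (hkmfix a ha') (hkmfix δ hδ') hTa' hTδ' _ rfl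
    set y := ∑ i ∈ Finset.range (n / Nat.gcd n k - 1),
      ∑ j ∈ Finset.Ico (i + 1) (n / Nat.gcd n k), δ ^ p ^ (k * j) * a ^ p ^ (k * i) with hydef
    have hyfix : y ^ p ^ n = y := by
      rw [hydef, SK.sum_ppow]
      apply Finset.sum_congr rfl
      intro i _
      rw [SK.sum_ppow]
      apply Finset.sum_congr rfl
      intro j _
      rw [mul_pow, SK.fixed_ppow hδ', SK.fixed_ppow ha']
    have hx₀y : x₀ = y + y ^ p ^ l := by
      rw [hx₀]
      simp only [Tmap]
      have h2 : 2 * l / l = 2 := Nat.mul_div_cancel 2 hl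
      rw [h2, Finset.sum_range_succ, Finset.sum_range_one]
      simp
    constructor
    · show x₀ ^ p ^ n = x₀
      rw [hx₀y, SK.add_ppow, hyfix, SK.fixed_ppow hyfix]
    · show Smap p l k x₀ = a
      rw [hx₀y]
      simp only [Smap]
      exact hS
  refine ⟨⟨?_, ?_⟩, key2⟩
  · -- forward direction
    rintro ⟨x, hxmem, hSx⟩
    have hx' : x ^ p ^ n = x := hxmem
    rw [← hSx]
    set t := ∑ j ∈ Finset.range (n / Nat.gcd n k), x ^ p ^ (Nat.gcd n k * j) with ht
    have htfix : t ^ p ^ Nat.gcd n k = t := by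
      rw [ht, SK.sum_ppow]
      have h1 : ∀ j ∈ Finset.range (n / Nat.gcd n k),
          (x ^ p ^ (Nat.gcd n k * j)) ^ p ^ Nat.gcd n k
            = x ^ p ^ (Nat.gcd n k * (j + 1)) := by
        intro j _
        rw [SK.ppow_ppow]
        congr 2 <;> ring
      rw [Finset.sum_congr rfl h1]
      exact SK.sum_shift_cyclic (fun j => x ^ p ^ (Nat.gcd n k * j)) _ (by
        rw [hnm, hx']
        simp)
    have hcompute : Tmap p (Nat.gcd n k) n (Smap p l k x)
        = ∑ i ∈ Finset.range (k / l), (-1 : AlgebraicClosure (ZMod p)) ^ i * t ^ p ^ (l * i) := by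
      simp only [Tmap, Smap]
      calc ∑ j ∈ Finset.range (n / Nat.gcd n k),
            (∑ i ∈ Finset.range (k / l),
              (-1 : AlgebraicClosure (ZMod p)) ^ i * x ^ p ^ (l * i)) ^ p ^ (Nat.gcd n k * j)
          = ∑ j ∈ Finset.range (n / Nat.gcd n k), ∑ i ∈ Finset.range (k / l),
              (-1 : AlgebraicClosure (ZMod p)) ^ i * x ^ p ^ (Nat.gcd n k * j + l * i) := by
            apply Finset.sum_congr rfl
            intro j _
            rw [SK.sum_ppow]
            apply Finset.sum_congr rfl
            intro i _
            rw [SK.neg_one_pow_mul_ppow, SK.ppow_ppow, add_comm (l * i) (Nat.gcd n k * j)]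
        _ = ∑ i ∈ Finset.range (k / l), (-1 : AlgebraicClosure (ZMod p)) ^ i * t ^ p ^ (l * i) := by
            rw [Finset.sum_comm]
            apply Finset.sum_congr rfl
            intro i _
            rw [ht, SK.sum_ppow, Finset.mul_sum]
            apply Finset.sum_congr rfl
            intro j _
            rw [SK.ppow_ppow]
    rw [hcompute]
    have he' : Nat.gcd n l = Nat.gcd (Nat.gcd n k) l := by
      rw [Nat.gcd_assoc, Nat.gcd_eq_right hlk]
    exact SK.S_vanish k l (Nat.gcd n k) (Nat.gcd n l) (Nat.lcm (Nat.gcd n k) l)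
      hl hd0 he' rfl hlk hdk hkl hcase t htfix
  · -- backward direction
    intro hTa0
    obtain ⟨δ, hδfix, hδtr⟩ := SK.exists_delta (p := p) (Nat.gcd n k) (n / Nat.gcd n k) hd0 hm0
    have hδmem : δ ∈ Ffield p n := by
      show δ ^ p ^ n = δ
      rw [← hnm]
      exact hδfix
    have hδT : Tmap p (Nat.gcd n k) n δ = 1 := by
      simpa [Tmap] using hδtr
    obtain ⟨hmem, hS⟩ := key2 hTa0 δ hδmem hδT _ rfl
    exact ⟨_, hmem, hS⟩
end
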